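/- For k ∈ {g,h}, let τ_k, m_k satisfy 0 < m_k, m_k ≤ τ_k, τ_k + m_k ≤ 1, let the source feature distribution of each group be the uniform distribution on [0,1], let the policy accept exactly when x ≥ τ_k (so f_k(x) = 1[x ≥ τ_k]), and let the target feature distribution of group k have density ω_k relative to the uniform distribution, where ω_k(x) = 1 on [0, τ_k − m_k) and [τ_k + m_k, 1], ω_k(x) = (τ_k − x)/m_k on [τ_k − m_k, τ_k), and ω_k(x) = (τ_k + 2m_k − x)/m_k on [τ_k, τ_k + m_k). Then the target demographic-parity violation satisfies |∫₀¹ f_g(x)ω_g(x) dx − ∫₀¹ f_h(x)ω_h(x) dx| ≤ |τ_g − τ_h| + sqrt( τ_g(1 − τ_g)·(2/3)m_g ) + sqrt( τ_h(1 − τ_h)·(2/3)m_h ). -/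

import Mathlib

open MeasureTheory Set intervalIntegral

private lemma ae_ne_pt (τ : ℝ) : ∀ᵐ (x : ℝ), x ≠ τ := by
  rw [MeasureTheory.ae_iff]
  simp

private lemma key_integral (τ m : ℝ) (ω : ℝ → ℝ)
    (hm : 0 < m) (hmτ : m ≤ τ) (hτm : τ + m ≤ 1)
    (hω3 : ∀ x, τ ≤ x → x < τ + m → ω x = (τ + 2 * m - x) / m)
    (hω4 : ∀ x, τ + m ≤ x → x ≤ 1 → ω x = 1) :
    (∫ x in (0:ℝ)..1, (if τ ≤ x then (1:ℝ) else 0) * ω x) = 1 - τ + m / 2 := by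
  have hm0 : m ≠ 0 := ne_of_gt hm
  have h0τ : (0:ℝ) ≤ τ := le_trans hm.le hmτ
  set f : ℝ → ℝ := fun x => (if τ ≤ x then (1:ℝ) else 0) * ω x with hf
  -- piecewise identifications
  have e1 : ∀ᵐ x : ℝ, x ∈ Set.uIoc (0:ℝ) τ → f x = 0 := by
    filter_upwards [ae_ne_pt τ] with x hx hmem
    rw [uIoc_of_le h0τ] at hmem
    have : ¬ τ ≤ x := not_le.mpr (lt_of_le_of_ne hmem.2 hx)
    simp [f, this]
  have e2 : EqOn f (fun x => (τ + 2 * m - x) / m) (uIcc τ (τ + m)) := by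
    intro x hx
    rw [uIcc_of_le (by linarith)] at hx
    obtain ⟨h1, h2⟩ := hx
    rcases lt_or_eq_of_le h2 with h | h
    · simp [f, h1, hω3 x h1 h]
    · have hω : ω x = 1 := hω4 x h.ge (by linarith)
      have hτx : τ ≤ x := h1
      simp only [f, hτx, if_pos, one_mul, hω]
      rw [h]
      field_simp
      ring
  have e3 : EqOn f (fun _ => (1:ℝ)) (uIcc (τ + m) 1) := by
    intro x hx
    rw [uIcc_of_le (by linarith)] at hx
    have hτx : τ ≤ x := by linarith [hx.1]
    have hω : ω x = 1 := hω4 x hx.1 hx.2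
    simp [f, hτx, hω]
  -- integrability of the pieces
  have i1 : IntervalIntegrable f volume 0 τ := by
    refine (_root_.intervalIntegrable_const (c := (0:ℝ))).congr_ae ?_
    filter_upwards [ae_restrict_of_ae e1, ae_restrict_mem measurableSet_uIoc] with x hx hmem
    exact (hx hmem).symm
  have i2 : IntervalIntegrable f volume τ (τ + m) := by
    have hc : Continuous (fun x : ℝ => (τ + 2 * m - x) / m) :=
      (continuous_const.sub continuous_id).div_const m
    refine (hc.intervalIntegrable τ (τ + m)).congr_ae ?_
    filter_upwards [ae_restrict_mem measurableSet_uIoc] with x hmem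
    exact (e2 (uIoc_subset_uIcc hmem)).symm
  have i3 : IntervalIntegrable f volume (τ + m) 1 := by
    refine (_root_.intervalIntegrable_const (c := (1:ℝ))).congr_ae ?_
    filter_upwards [ae_restrict_mem measurableSet_uIoc] with x hmem
    exact (e3 (uIoc_subset_uIcc hmem)).symm
  -- split the integral
  have hsplit : (∫ x in (0:ℝ)..1, f x)
      = (∫ x in (0:ℝ)..τ, f x) + (∫ x in τ..(τ+m), f x) + (∫ x in (τ+m)..1, f x) := by
    rw [integral_add_adjacent_intervals i1 i2, integral_add_adjacent_intervals (i1.trans i2) i3]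
  have v1 : (∫ x in (0:ℝ)..τ, f x) = 0 := by
    rw [integral_congr_ae e1, intervalIntegral.integral_zero]
  have v2 : (∫ x in τ..(τ+m), f x) = 3 * m / 2 := by
    rw [integral_congr e2]
    have : (fun x : ℝ => (τ + 2 * m - x) / m)
        = fun x : ℝ => (fun y : ℝ => τ + 2 * m - y) x / m := rfl
    rw [this, intervalIntegral.integral_div,
      intervalIntegral.integral_sub (_root_.intervalIntegrable_const) intervalIntegrable_id,
      intervalIntegral.integral_const, integral_id]
    rw [smul_eq_mul]
    field_simp
    ring
  have v3 : (∫ x in (τ+m)..1, f x) = 1 - τ - m := by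
    rw [integral_congr e3, intervalIntegral.integral_const]
    simp
    ring
  rw [hsplit, v1, v2, v3]; ring

private lemma half_le_sqrt (τ m : ℝ) (hm : 0 < m) (hmτ : m ≤ τ) (hτm : τ + m ≤ 1) :
    m / 2 ≤ Real.sqrt (τ * (1 - τ) * (2 / 3 * m)) := by
  have h : (m / 2) ^ 2 ≤ τ * (1 - τ) * (2 / 3 * m) := by
    nlinarith [mul_nonneg (sub_nonneg.mpr hmτ) (by linarith : (0:ℝ) ≤ 1 - τ - m), sq_nonneg m]
  calc m / 2 = Real.sqrt ((m / 2) ^ 2) := (Real.sqrt_sq (by linarith)).symm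
    _ ≤ _ := Real.sqrt_le_sqrt h

/-- **Proposition 1 (demographic parity under strategic response).** For two groups
`k ∈ {g, h}` with threshold policies `1[x ≥ τ_k]`, uniform source features on `[0,1]`,
and target feature densities given by the strategic-response reweighting coefficients
`ω_k`, the target demographic-parity violation is at most the source violation
`|τ_g − τ_h|` plus `∑_k sqrt(τ_k (1 − τ_k) · (2/3) m_k)`. -/
theorem dp_strategic_response_bound (τg τh mg mh : ℝ)
    (hmg : 0 < mg) (hmτg : mg ≤ τg) (hτmg : τg + mg ≤ 1)
    (hmh : 0 < mh) (hmτh : mh ≤ τh) (hτmh : τh + mh ≤ 1)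
    (ωg ωh : ℝ → ℝ)
    (hωg1 : ∀ x, 0 ≤ x → x < τg - mg → ωg x = 1)
    (hωg2 : ∀ x, τg - mg ≤ x → x < τg → ωg x = (τg - x) / mg)
    (hωg3 : ∀ x, τg ≤ x → x < τg + mg → ωg x = (τg + 2 * mg - x) / mg)
    (hωg4 : ∀ x, τg + mg ≤ x → x ≤ 1 → ωg x = 1)
    (hωh1 : ∀ x, 0 ≤ x → x < τh - mh → ωh x = 1)
    (hωh2 : ∀ x, τh - mh ≤ x → x < τh → ωh x = (τh - x) / mh)
    (hωh3 : ∀ x, τh ≤ x → x < τh + mh → ωh x = (τh + 2 * mh - x) / mh)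
    (hωh4 : ∀ x, τh + mh ≤ x → x ≤ 1 → ωh x = 1) :
    |(∫ x in (0:ℝ)..1, (if τg ≤ x then (1:ℝ) else 0) * ωg x)
        - ∫ x in (0:ℝ)..1, (if τh ≤ x then (1:ℝ) else 0) * ωh x|
      ≤ |τg - τh| + Real.sqrt (τg * (1 - τg) * (2 / 3 * mg))
        + Real.sqrt (τh * (1 - τh) * (2 / 3 * mh)) := by
  rw [key_integral τg mg ωg hmg hmτg hτmg hωg3 hωg4,
      key_integral τh mh ωh hmh hmτh hτmh hωh3 hωh4]
  have hg := half_le_sqrt τg mg hmg hmτg hτmg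
  have hh := half_le_sqrt τh mh hmh hmτh hτmh
  have habs : |1 - τg + mg / 2 - (1 - τh + mh / 2)| ≤ |τg - τh| + mg / 2 + mh / 2 := by
    have h1 : |1 - τg + mg / 2 - (1 - τh + mh / 2)| ≤ |τh - τg| + |mg / 2 - mh / 2| := by
      calc |1 - τg + mg / 2 - (1 - τh + mh / 2)| = |(τh - τg) + (mg / 2 - mh / 2)| := by
            ring_nf
        _ ≤ _ := abs_add_le _ _
    have h2 : |mg / 2 - mh / 2| ≤ mg / 2 + mh / 2 := by
      rw [abs_sub_le_iff]
      constructor <;> linarith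
    rw [abs_sub_comm τh τg] at h1
    linarith
  linarith
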